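/- There exists a Lie subalgebra 𝔥 of so(2,2) with 𝔥 ≠ so(2,2) and dim 𝔥 = 5 (one less than dim so(2,2) = 6). -/

import Mathlib

open Matrix

attribute [local instance 100] LieRing.ofAssociativeRing

/-- The matrix `diag(-1,-1,1,1)` of the signature `(2,2)` form. -/
def eta22 : Matrix (Fin 4) (Fin 4) ℝ :=
  Matrix.diagonal ![(-1 : ℝ), -1, 1, 1]

/-- The Lie algebra `so(2,2)` of matrices `A` with `Aᵀη₂,₂ + η₂,₂A = 0`. -/
def so22 : LieSubalgebra ℝ (Matrix (Fin 4) (Fin 4) ℝ) :=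
  skewAdjointMatricesLieSubalgebra eta22

def M1 : Matrix (Fin 4) (Fin 4) ℝ := !![0,-1,0,1; 1,0,-1,0; 0,-1,0,1; 1,0,-1,0]

def M2 : Matrix (Fin 4) (Fin 4) ℝ := !![0,0,1,0; 0,0,0,0; 1,0,0,0; 0,0,0,0]

def M3 : Matrix (Fin 4) (Fin 4) ℝ := !![0,0,0,1; 0,0,0,0; 0,0,0,1; 1,0,-1,0]

def M4 : Matrix (Fin 4) (Fin 4) ℝ := !![0,0,0,0; 0,0,1,0; 0,1,0,-1; 0,0,1,0]

def M5 : Matrix (Fin 4) (Fin 4) ℝ := !![0,0,0,0; 0,0,0,1; 0,0,0,0; 0,1,0,0]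

def bmat : Fin 5 → Matrix (Fin 4) (Fin 4) ℝ := ![M1, M2, M3, M4, M5]

def Vspan : Submodule ℝ (Matrix (Fin 4) (Fin 4) ℝ) :=
  Submodule.span ℝ (Set.range bmat)

lemma bmat_mem (i : Fin 5) : bmat i ∈ Vspan :=
  Submodule.subset_span ⟨i, rfl⟩

set_option maxHeartbeats 800000 in
lemma c12 : M1 * M2 - M2 * M1 = -M1 := by
  ext a b
  fin_cases a <;> fin_cases b <;>
    norm_num [M1, M2, M3, M4, M5, Matrix.mul_apply, Fin.sum_univ_four]

set_option maxHeartbeats 800000 in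
lemma c13 : M1 * M3 - M3 * M1 = 0 := by
  ext a b
  fin_cases a <;> fin_cases b <;>
    norm_num [M1, M2, M3, M4, M5, Matrix.mul_apply, Fin.sum_univ_four]

set_option maxHeartbeats 800000 in
lemma c14 : M1 * M4 - M4 * M1 = 0 := by
  ext a b
  fin_cases a <;> fin_cases b <;>
    norm_num [M1, M2, M3, M4, M5, Matrix.mul_apply, Fin.sum_univ_four]

set_option maxHeartbeats 800000 in
lemma c15 : M1 * M5 - M5 * M1 = -M1 := by
  ext a b
  fin_cases a <;> fin_cases b <;>
    norm_num [M1, M2, M3, M4, M5, Matrix.mul_apply, Fin.sum_univ_four]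

set_option maxHeartbeats 800000 in
lemma c23 : M2 * M3 - M3 * M2 = M3 := by
  ext a b
  fin_cases a <;> fin_cases b <;>
    norm_num [M1, M2, M3, M4, M5, Matrix.mul_apply, Fin.sum_univ_four]

set_option maxHeartbeats 800000 in
lemma c24 : M2 * M4 - M4 * M2 = -M1-M4 := by
  ext a b
  fin_cases a <;> fin_cases b <;>
    norm_num [M1, M2, M3, M4, M5, Matrix.mul_apply, Fin.sum_univ_four]

set_option maxHeartbeats 800000 in
lemma c25 : M2 * M5 - M5 * M2 = 0 := by
  ext a b
  fin_cases a <;> fin_cases b <;>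
    norm_num [M1, M2, M3, M4, M5, Matrix.mul_apply, Fin.sum_univ_four]

set_option maxHeartbeats 800000 in
lemma c34 : M3 * M4 - M4 * M3 = M2-M5 := by
  ext a b
  fin_cases a <;> fin_cases b <;>
    norm_num [M1, M2, M3, M4, M5, Matrix.mul_apply, Fin.sum_univ_four]

set_option maxHeartbeats 800000 in
lemma c35 : M3 * M5 - M5 * M3 = -M1+M3 := by
  ext a b
  fin_cases a <;> fin_cases b <;>
    norm_num [M1, M2, M3, M4, M5, Matrix.mul_apply, Fin.sum_univ_four]

set_option maxHeartbeats 800000 in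
lemma c45 : M4 * M5 - M5 * M4 = -M4 := by
  ext a b
  fin_cases a <;> fin_cases b <;>
    norm_num [M1, M2, M3, M4, M5, Matrix.mul_apply, Fin.sum_univ_four]

def J01 : Matrix (Fin 4) (Fin 4) ℝ := !![0,1,0,0; -1,0,0,0; 0,0,0,0; 0,0,0,0]

set_option maxHeartbeats 800000 in
lemma skew_M1 : (M1)ᵀ * eta22 = eta22 * (-M1) := by
  ext a b
  fin_cases a <;> fin_cases b <;>
    norm_num [M1, M2, M3, M4, M5, J01, eta22, Matrix.mul_apply, Fin.sum_univ_four,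
      Matrix.diagonal, Matrix.transpose_apply, Matrix.vecHead, Matrix.vecTail]

set_option maxHeartbeats 800000 in
lemma skew_M2 : (M2)ᵀ * eta22 = eta22 * (-M2) := by
  ext a b
  fin_cases a <;> fin_cases b <;>
    norm_num [M1, M2, M3, M4, M5, J01, eta22, Matrix.mul_apply, Fin.sum_univ_four,
      Matrix.diagonal, Matrix.transpose_apply, Matrix.vecHead, Matrix.vecTail]

set_option maxHeartbeats 800000 in
lemma skew_M3 : (M3)ᵀ * eta22 = eta22 * (-M3) := by
  ext a b
  fin_cases a <;> fin_cases b <;>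
    norm_num [M1, M2, M3, M4, M5, J01, eta22, Matrix.mul_apply, Fin.sum_univ_four,
      Matrix.diagonal, Matrix.transpose_apply, Matrix.vecHead, Matrix.vecTail]

set_option maxHeartbeats 800000 in
lemma skew_M4 : (M4)ᵀ * eta22 = eta22 * (-M4) := by
  ext a b
  fin_cases a <;> fin_cases b <;>
    norm_num [M1, M2, M3, M4, M5, J01, eta22, Matrix.mul_apply, Fin.sum_univ_four,
      Matrix.diagonal, Matrix.transpose_apply, Matrix.vecHead, Matrix.vecTail]

set_option maxHeartbeats 800000 in
lemma skew_M5 : (M5)ᵀ * eta22 = eta22 * (-M5) := by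
  ext a b
  fin_cases a <;> fin_cases b <;>
    norm_num [M1, M2, M3, M4, M5, J01, eta22, Matrix.mul_apply, Fin.sum_univ_four,
      Matrix.diagonal, Matrix.transpose_apply, Matrix.vecHead, Matrix.vecTail]

set_option maxHeartbeats 800000 in
lemma skew_J01 : (J01)ᵀ * eta22 = eta22 * (-J01) := by
  ext a b
  fin_cases a <;> fin_cases b <;>
    norm_num [M1, M2, M3, M4, M5, J01, eta22, Matrix.mul_apply, Fin.sum_univ_four,
      Matrix.diagonal, Matrix.transpose_apply, Matrix.vecHead, Matrix.vecTail]

lemma neg_of_comm {x y c : Matrix (Fin 4) (Fin 4) ℝ} (h : x * y - y * x = c) :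
    y * x - x * y = -c := by rw [← h]; abel

lemma bracket_base (i j : Fin 5) : ⁅bmat i, bmat j⁆ ∈ Vspan := by
  have h0 := bmat_mem 0
  have h1 := bmat_mem 1
  have h2 := bmat_mem 2
  have h3 := bmat_mem 3
  have h4 := bmat_mem 4
  fin_cases i <;> fin_cases j <;> rw [Ring.lie_def]
  · show M1 * M1 - M1 * M1 ∈ Vspan
    rw [sub_self]; exact Submodule.zero_mem _
  · show M1 * M2 - M2 * M1 ∈ Vspan
    rw [c12]; exact Submodule.neg_mem _ h0
  · show M1 * M3 - M3 * M1 ∈ Vspan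
    rw [c13]; exact Submodule.zero_mem _
  · show M1 * M4 - M4 * M1 ∈ Vspan
    rw [c14]; exact Submodule.zero_mem _
  · show M1 * M5 - M5 * M1 ∈ Vspan
    rw [c15]; exact Submodule.neg_mem _ h0
  · show M2 * M1 - M1 * M2 ∈ Vspan
    rw [neg_of_comm c12, show -(-M1) = M1 by abel]; exact h0
  · show M2 * M2 - M2 * M2 ∈ Vspan
    rw [sub_self]; exact Submodule.zero_mem _
  · show M2 * M3 - M3 * M2 ∈ Vspan
    rw [c23]; exact h2
  · show M2 * M4 - M4 * M2 ∈ Vspan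
    rw [c24]; exact Submodule.sub_mem _ (Submodule.neg_mem _ h0) h3
  · show M2 * M5 - M5 * M2 ∈ Vspan
    rw [c25]; exact Submodule.zero_mem _
  · show M3 * M1 - M1 * M3 ∈ Vspan
    rw [neg_of_comm c13, neg_zero]; exact Submodule.zero_mem _
  · show M3 * M2 - M2 * M3 ∈ Vspan
    rw [neg_of_comm c23, show -(M3) = -M3 by abel]; exact Submodule.neg_mem _ h2
  · show M3 * M3 - M3 * M3 ∈ Vspan
    rw [sub_self]; exact Submodule.zero_mem _
  · show M3 * M4 - M4 * M3 ∈ Vspan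
    rw [c34]; exact Submodule.sub_mem _ h1 h4
  · show M3 * M5 - M5 * M3 ∈ Vspan
    rw [c35]; exact Submodule.add_mem _ (Submodule.neg_mem _ h0) h2
  · show M4 * M1 - M1 * M4 ∈ Vspan
    rw [neg_of_comm c14, neg_zero]; exact Submodule.zero_mem _
  · show M4 * M2 - M2 * M4 ∈ Vspan
    rw [neg_of_comm c24, show -(-M1-M4) = M1+M4 by abel]; exact Submodule.add_mem _ h0 h3
  · show M4 * M3 - M3 * M4 ∈ Vspan
    rw [neg_of_comm c34, show -(M2-M5) = M5-M2 by abel]; exact Submodule.sub_mem _ h4 h1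
  · show M4 * M4 - M4 * M4 ∈ Vspan
    rw [sub_self]; exact Submodule.zero_mem _
  · show M4 * M5 - M5 * M4 ∈ Vspan
    rw [c45]; exact Submodule.neg_mem _ h3
  · show M5 * M1 - M1 * M5 ∈ Vspan
    rw [neg_of_comm c15, show -(-M1) = M1 by abel]; exact h0
  · show M5 * M2 - M2 * M5 ∈ Vspan
    rw [neg_of_comm c25, neg_zero]; exact Submodule.zero_mem _
  · show M5 * M3 - M3 * M5 ∈ Vspan
    rw [neg_of_comm c35, show -(-M1+M3) = M1-M3 by abel]; exact Submodule.sub_mem _ h0 h2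
  · show M5 * M4 - M4 * M5 ∈ Vspan
    rw [neg_of_comm c45, show -(-M4) = M4 by abel]; exact h3
  · show M5 * M5 - M5 * M5 ∈ Vspan
    rw [sub_self]; exact Submodule.zero_mem _

lemma Vspan_lie_closed {x y : Matrix (Fin 4) (Fin 4) ℝ}
    (hx : x ∈ Vspan) (hy : y ∈ Vspan) : ⁅x, y⁆ ∈ Vspan := by
  induction hx, hy using Submodule.span_induction₂ with
  | mem_mem a b ha hb =>
    obtain ⟨i, rfl⟩ := ha; obtain ⟨j, rfl⟩ := hb; exact bracket_base i j
  | zero_left b hb => simpa using Submodule.zero_mem Vspan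
  | zero_right a ha => simpa using Submodule.zero_mem Vspan
  | add_left a b c _ _ _ p1 p2 => rw [add_lie]; exact Submodule.add_mem _ p1 p2
  | add_right a b c _ _ _ p1 p2 => rw [lie_add]; exact Submodule.add_mem _ p1 p2
  | smul_left r a b _ _ p => rw [smul_lie]; exact Submodule.smul_mem _ _ p
  | smul_right r a b _ _ p => rw [lie_smul]; exact Submodule.smul_mem _ _ p

/-- The stabilizer subalgebra as a `LieSubalgebra`. -/
def hSub : LieSubalgebra ℝ (Matrix (Fin 4) (Fin 4) ℝ) :=
  { Vspan with lie_mem' := fun hx hy => Vspan_lie_closed hx hy }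

def ffun : Matrix (Fin 4) (Fin 4) ℝ →ₗ[ℝ] ℝ where
  toFun A := -A 0 1 - A 0 3 + A 1 2 + A 2 3
  map_add' := by intro A B; simp [Matrix.add_apply]; ring
  map_smul' := by intro c A; simp [Matrix.smul_apply]; ring

lemma ffun_vanish : Vspan ≤ LinearMap.ker ffun := by
  rw [Vspan, Submodule.span_le]
  rintro _ ⟨i, rfl⟩
  fin_cases i <;>
    simp [ffun, bmat, M1, M2, M3, M4, M5, Matrix.vecHead, Matrix.vecTail]

lemma bmat_indep : LinearIndependent ℝ bmat := by
  rw [Fintype.linearIndependent_iff]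
  intro g hg
  have e := fun (a b : Fin 4) => congrFun (congrFun hg a) b
  have e1 := e 0 1
  have e2 := e 2 0
  have e3 := e 3 0
  have e4 := e 1 2
  have e5 := e 1 3
  simp [Fin.sum_univ_five, bmat, M1, M2, M3, M4, M5, Matrix.add_apply,
    Matrix.smul_apply, Matrix.vecHead, Matrix.vecTail] at e1 e2 e3 e4 e5
  intro i
  fin_cases i <;> simp <;> linarith

/-- `so(2,2)` admits a proper Lie subalgebra of dimension 5
(one less than `dim so(2,2) = 6`). -/
theorem stmt18 :
    ∃ 𝔥 : LieSubalgebra ℝ (Matrix (Fin 4) (Fin 4) ℝ),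
      𝔥 ≤ so22 ∧ 𝔥 ≠ so22 ∧ Module.finrank ℝ 𝔥 = 5 := by
  refine ⟨hSub, ?_, ?_, ?_⟩
  · intro x hx
    have hle : Vspan ≤ so22.toSubmodule := by
      rw [Vspan, Submodule.span_le]
      rintro _ ⟨i, rfl⟩
      have : ∀ A : Matrix (Fin 4) (Fin 4) ℝ, Aᵀ * eta22 = eta22 * (-A) → A ∈ so22 := by
        intro A hA
        rw [so22, mem_skewAdjointMatricesLieSubalgebra, mem_skewAdjointMatricesSubmodule]
        exact hA
      fin_cases i
      · exact this M1 skew_M1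
      · exact this M2 skew_M2
      · exact this M3 skew_M3
      · exact this M4 skew_M4
      · exact this M5 skew_M5
    exact hle hx
  · intro h
    have hJ : J01 ∈ hSub := by
      rw [h, so22, mem_skewAdjointMatricesLieSubalgebra, mem_skewAdjointMatricesSubmodule]
      exact skew_J01
    have hz : ffun J01 = 0 := ffun_vanish hJ
    simp [ffun, J01, Matrix.vecHead, Matrix.vecTail] at hz
  · have h5 : Module.finrank ℝ Vspan = 5 := by
      rw [Vspan, finrank_span_eq_card bmat_indep]
      simp
    exact h5
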